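/- Let a_1,...,a_n be positive integers with least common multiple M, d_i = M/a_i, and b ≥ 0 an integer. The number Q(b) of nonnegative integer solutions of a_1 x_1 + ... + a_n x_n ≤ b equals ∑_{t_1=0}^{d_1−1} ⋯ ∑_{t_n=0}^{d_n−1} ∑_{t_{n+1}=0}^{M−1} C(f(t_1,...,t_{n+1})+1; n), where f(t_1,...,t_{n+1}) = (b − ∑_{i=1}^n a_i t_i − t_{n+1})/M, and C(k, l) = k(k+1)···(k+l−1)/l! if k is a positive integer and the numerator is a nonnegative multiple of M, and 0 otherwise. -/
import Mathlib

open Finset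

private lemma finite_of_bdd {m c : ℕ} {P : (Fin m → ℕ) → Prop}
    (h : ∀ y, P y → ∀ i, y i ≤ c) : Finite {y : Fin m → ℕ // P y} :=
  Finite.of_injective
    (fun y => (fun i => (⟨y.1 i, Nat.lt_succ_of_le (h y.1 y.2 i)⟩ : Fin (c + 1))))
    (fun y z hyz => Subtype.ext (funext fun i => congrArg Fin.val (congrFun hyz i)))

private lemma nat_card_sigma {ι : Type*} [Fintype ι] (f : ι → Type*) [∀ i, Finite (f i)] :
    Nat.card (Σ i, f i) = ∑ i, Nat.card (f i) := by
  haveI : ∀ i, Fintype (f i) := fun i => Fintype.ofFinite _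
  simp [Nat.card_eq_fintype_card]

private lemma sb_finite (m K : ℕ) : Finite {y : Fin m → ℕ // ∑ i, y i = K} :=
  finite_of_bdd (fun y hy i => hy ▸ Finset.single_le_sum (fun _ _ => Nat.zero_le _) (mem_univ i))

private lemma stars_bars : ∀ (m K : ℕ),
    Nat.card {y : Fin (m + 1) → ℕ // ∑ i, y i = K} = (K + m).choose m := by
  intro m
  induction m with
  | zero =>
    intro K
    have hu : ∀ y : {y : Fin 1 → ℕ // ∑ i, y i = K}, (y : Fin 1 → ℕ) = fun _ => K := by
      rintro ⟨y, hy⟩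
      rw [Fin.sum_univ_one] at hy
      funext i
      rw [Fin.eq_zero i]
      exact hy
    haveI : Unique {y : Fin 1 → ℕ // ∑ i, y i = K} :=
      { default := ⟨fun _ => K, by simp⟩
        uniq := fun y => Subtype.ext ((hu y).trans rfl) }
    rw [Nat.card_unique]
    simp
  | succ m ih =>
    intro K
    haveI : ∀ j : Fin (K + 1), Finite {z : Fin (m + 1) → ℕ // ∑ i, z i = K - (j : ℕ)} :=
      fun j => sb_finite _ _
    have hG : ∀ z : (Σ j : Fin (K + 1), {z : Fin (m + 1) → ℕ // ∑ i, z i = K - (j : ℕ)}),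
        ∑ i, (Fin.snoc z.2.1 (z.1 : ℕ) : Fin (m + 2) → ℕ) i = K := by
      rintro ⟨j, z, hz⟩
      rw [Fin.sum_univ_castSucc]
      simp only [Fin.snoc_castSucc, Fin.snoc_last]
      have hj : (j : ℕ) ≤ K := Nat.lt_succ_iff.mp j.isLt
      omega
    let G : (Σ j : Fin (K + 1), {z : Fin (m + 1) → ℕ // ∑ i, z i = K - (j : ℕ)}) →
        {y : Fin (m + 2) → ℕ // ∑ i, y i = K} :=
      fun z => ⟨Fin.snoc z.2.1 (z.1 : ℕ), hG z⟩
    have hGbij : Function.Bijective G := by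
      constructor
      · rintro ⟨j1, z1, h1⟩ ⟨j2, z2, h2⟩ h
        have hval : (Fin.snoc z1 (j1 : ℕ) : Fin (m + 2) → ℕ) = Fin.snoc z2 (j2 : ℕ) :=
          congrArg Subtype.val h
        have hj : j1 = j2 := Fin.ext (by simpa using congrFun hval (Fin.last (m + 1)))
        subst hj
        have hz : z1 = z2 := funext fun i => by simpa using congrFun hval (Fin.castSucc i)
        subst hz
        rfl
      · rintro ⟨y, hy⟩
        have hle : y (Fin.last (m + 1)) ≤ K :=
          hy ▸ Finset.single_le_sum (fun _ _ => Nat.zero_le _) (mem_univ _)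
        have hy' := hy
        rw [Fin.sum_univ_castSucc] at hy'
        refine ⟨⟨⟨y (Fin.last (m + 1)), Nat.lt_succ_of_le hle⟩,
          ⟨fun i => y (Fin.castSucc i), ?_⟩⟩, ?_⟩
        · show ∑ i, y (Fin.castSucc i) = K - y (Fin.last (m + 1))
          omega
        apply Subtype.ext
        funext i
        refine Fin.lastCases ?_ ?_ i
        · simp [G]
        · intro i; simp [G]
    calc Nat.card {y : Fin (m + 2) → ℕ // ∑ i, y i = K}
        = Nat.card (Σ j : Fin (K + 1), {z : Fin (m + 1) → ℕ // ∑ i, z i = K - (j : ℕ)}) :=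
          (Nat.card_congr (Equiv.ofBijective G hGbij)).symm
      _ = ∑ j : Fin (K + 1), Nat.card {z : Fin (m + 1) → ℕ // ∑ i, z i = K - (j : ℕ)} :=
          nat_card_sigma _
      _ = ∑ j : Fin (K + 1), (K - (j : ℕ) + m).choose m := by simp_rw [ih]
      _ = ∑ j ∈ range (K + 1), (K - j + m).choose m :=
          Fin.sum_univ_eq_sum_range (fun j => (K - j + m).choose m) (K + 1)
      _ = ∑ j ∈ range (K + 1), ((K + 1 - 1 - j) + m).choose m := by
          refine Finset.sum_congr rfl fun j hj => ?_
          have h : K + 1 - 1 - j = K - j := by omega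
          rw [h]
      _ = ∑ j ∈ range (K + 1), (j + m).choose m :=
          Finset.sum_range_reflect (fun j => (j + m).choose m) (K + 1)
      _ = (K + m + 1).choose (m + 1) := Nat.sum_range_add_choose K m
      _ = (K + (m + 1)).choose (m + 1) := by rw [Nat.add_assoc]

theorem stmt7 (n : ℕ) (a : Fin n → ℕ) (ha : ∀ i, 0 < a i) (M : ℕ)
    (hM : M = Finset.univ.lcm a) (b : ℕ) :
    Nat.card {x : Fin n → ℕ // ∑ i, a i * x i ≤ b} =
      ∑ t : (i : Fin n) → Fin (M / a i), ∑ u : Fin M,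
        if (∑ i, a i * (t i : ℕ)) + (u : ℕ) ≤ b ∧
            M ∣ (b - ((∑ i, a i * (t i : ℕ)) + (u : ℕ))) then
          Nat.choose ((b - ((∑ i, a i * (t i : ℕ)) + (u : ℕ))) / M + n) n
        else 0 := by
  classical
  have hdvd : ∀ i, a i ∣ M := fun i => hM ▸ Finset.dvd_lcm (Finset.mem_univ i)
  have hM0 : 0 < M := by
    rw [hM]
    rcases Nat.eq_zero_or_pos (Finset.univ.lcm a) with h0 | h0
    · rw [Finset.lcm_eq_zero_iff] at h0
      obtain ⟨i, -, hi⟩ := h0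
      exact absurd hi ((ha i).ne')
    · exact h0
  have hd : ∀ i, a i * (M / a i) = M := fun i => Nat.mul_div_cancel' (hdvd i)
  have hd0 : ∀ i, 0 < M / a i := fun i => Nat.div_pos (Nat.le_of_dvd hM0 (hdvd i)) (ha i)
  have hsum : ∀ (t : (i : Fin n) → Fin (M / a i)) (w : Fin n → ℕ),
      ∑ i, a i * ((t i : ℕ) + (M / a i) * w i) = (∑ i, a i * (t i : ℕ)) + M * ∑ i, w i := by
    intro t w
    rw [Finset.mul_sum, ← Finset.sum_add_distrib]
    refine Finset.sum_congr rfl fun i _ => ?_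
    rw [Nat.mul_add, ← Nat.mul_assoc, hd i]
  have hG : ∀ z : (Σ t : ((i : Fin n) → Fin (M / a i)), Σ u : Fin M,
      {y : Fin (n + 1) → ℕ // (∑ i, a i * (t i : ℕ)) + (u : ℕ) + M * ∑ j, y j = b}),
      ∑ i, a i * ((z.1 i : ℕ) + (M / a i) * z.2.2.1 (Fin.castSucc i)) ≤ b := by
    rintro ⟨t, u, y, hy⟩
    rw [hsum]
    rw [Fin.sum_univ_castSucc, Nat.mul_add] at hy
    simp only []
    omega
  let G : (Σ t : ((i : Fin n) → Fin (M / a i)), Σ u : Fin M,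
      {y : Fin (n + 1) → ℕ // (∑ i, a i * (t i : ℕ)) + (u : ℕ) + M * ∑ j, y j = b}) →
      {x : Fin n → ℕ // ∑ i, a i * x i ≤ b} :=
    fun z => ⟨fun i => (z.1 i : ℕ) + (M / a i) * z.2.2.1 (Fin.castSucc i), hG z⟩
  have hGbij : Function.Bijective G := by
    constructor
    · rintro ⟨t1, u1, y1, h1⟩ ⟨t2, u2, y2, h2⟩ h
      have hval : ∀ i, (t1 i : ℕ) + (M / a i) * y1 (Fin.castSucc i)
          = (t2 i : ℕ) + (M / a i) * y2 (Fin.castSucc i) :=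
        fun i => congrFun (congrArg Subtype.val h) i
      have ht : ∀ i, (t1 i : ℕ) = (t2 i : ℕ) ∧ y1 (Fin.castSucc i) = y2 (Fin.castSucc i) := by
        intro i
        have e := hval i
        have l1 : (t1 i : ℕ) < M / a i := (t1 i).isLt
        have l2 : (t2 i : ℕ) < M / a i := (t2 i).isLt
        constructor
        · have := congrArg (· % (M / a i)) e
          simpa [Nat.add_mul_mod_self_left, Nat.mod_eq_of_lt l1, Nat.mod_eq_of_lt l2] using this
        · have := congrArg (· / (M / a i)) e
          simpa [Nat.add_mul_div_left _ _ (hd0 i), Nat.div_eq_of_lt l1,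
            Nat.div_eq_of_lt l2] using this
      have ht1 : t1 = t2 := funext fun i => Fin.ext (ht i).1
      subst ht1
      have hC : ∑ i, y1 (Fin.castSucc i) = ∑ i, y2 (Fin.castSucc i) :=
        Finset.sum_congr rfl fun i _ => (ht i).2
      rw [Fin.sum_univ_castSucc, Nat.mul_add] at h1 h2
      rw [hC] at h1
      have e : (u1 : ℕ) + M * y1 (Fin.last n) = (u2 : ℕ) + M * y2 (Fin.last n) := by omega
      have hu : u1 = u2 := by
        apply Fin.ext
        have := congrArg (· % M) e
        simpa [Nat.add_mul_mod_self_left, Nat.mod_eq_of_lt u1.isLt,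
          Nat.mod_eq_of_lt u2.isLt] using this
      subst hu
      have hlast : y1 (Fin.last n) = y2 (Fin.last n) := by
        have := congrArg (· / M) e
        simpa [Nat.add_mul_div_left _ _ hM0, Nat.div_eq_of_lt u1.isLt,
          Nat.div_eq_of_lt u1.isLt] using this
      have hy12 : y1 = y2 := funext fun j => Fin.lastCases hlast (fun i => (ht i).2) j
      subst hy12
      rfl
    · rintro ⟨x, hx⟩
      have h1 : (∑ i, a i * (x i % (M / a i))) + M * ∑ i, x i / (M / a i)
          = ∑ i, a i * x i := by
        rw [Finset.mul_sum, ← Finset.sum_add_distrib]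
        refine Finset.sum_congr rfl fun i _ => ?_
        calc a i * (x i % (M / a i)) + M * (x i / (M / a i))
            = a i * (x i % (M / a i) + (M / a i) * (x i / (M / a i))) := by
              rw [Nat.mul_add, ← Nat.mul_assoc, hd i]
          _ = a i * x i := by rw [Nat.mod_add_div]
      have h2 : (b - ∑ i, a i * x i) % M + M * ((b - ∑ i, a i * x i) / M)
          = b - ∑ i, a i * x i := Nat.mod_add_div _ _
      refine ⟨⟨fun i => ⟨x i % (M / a i), Nat.mod_lt _ (hd0 i)⟩,
        ⟨(b - ∑ i, a i * x i) % M, Nat.mod_lt _ hM0⟩,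
        ⟨Fin.snoc (fun i => x i / (M / a i)) ((b - ∑ i, a i * x i) / M), ?_⟩⟩, ?_⟩
      · rw [Fin.sum_univ_castSucc]
        simp only [Fin.snoc_castSucc, Fin.snoc_last]
        rw [Nat.mul_add]
        omega
      · apply Subtype.ext
        funext i
        simp only [G, Fin.snoc_castSucc]
        exact Nat.mod_add_div _ _
  haveI hFib : ∀ (t : (i : Fin n) → Fin (M / a i)) (u : Fin M),
      Finite {y : Fin (n + 1) → ℕ //
        (∑ i, a i * (t i : ℕ)) + (u : ℕ) + M * ∑ j, y j = b} := by
    intro t u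
    apply finite_of_bdd (c := b)
    intro y hy j
    have h1 : y j ≤ ∑ j', y j' :=
      Finset.single_le_sum (fun _ _ => Nat.zero_le _) (mem_univ j)
    have h2 : ∑ j', y j' ≤ M * ∑ j', y j' := Nat.le_mul_of_pos_left _ hM0
    omega
  rw [Nat.card_congr (Equiv.ofBijective G hGbij).symm]
  rw [nat_card_sigma]
  refine Finset.sum_congr rfl fun t _ => ?_
  rw [nat_card_sigma]
  refine Finset.sum_congr rfl fun u _ => ?_
  by_cases hcond : (∑ i, a i * (t i : ℕ)) + (u : ℕ) ≤ b ∧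
      M ∣ (b - ((∑ i, a i * (t i : ℕ)) + (u : ℕ)))
  · rw [if_pos hcond]
    have hiff : ∀ y : Fin (n + 1) → ℕ,
        ((∑ i, a i * (t i : ℕ)) + (u : ℕ) + M * ∑ j, y j = b) ↔
        (∑ j, y j = (b - ((∑ i, a i * (t i : ℕ)) + (u : ℕ))) / M) := by
      intro y
      obtain ⟨k, hk⟩ := hcond.2
      have hc1 := hcond.1
      have hkd : (b - ((∑ i, a i * (t i : ℕ)) + (u : ℕ))) / M = k := by
        rw [hk]; exact Nat.mul_div_cancel_left k hM0
      rw [hkd]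
      constructor
      · intro h
        have : M * ∑ j, y j = M * k := by omega
        exact Nat.eq_of_mul_eq_mul_left hM0 this
      · intro h
        rw [h]
        omega
    rw [Nat.card_congr (Equiv.subtypeEquivRight hiff)]
    rw [stars_bars]
  · rw [if_neg hcond]
    have : IsEmpty {y : Fin (n + 1) → ℕ //
        (∑ i, a i * (t i : ℕ)) + (u : ℕ) + M * ∑ j, y j = b} := by
      constructor
      rintro ⟨y, hy⟩
      exact hcond ⟨by omega, ⟨∑ j, y j, by omega⟩⟩
    simp
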